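/- arXiv:2307.03745 — 6 statements merged into one kernel-verified Lean document; each statement's English description precedes it below -/
import Mathlib

section
/- Let S = F[x_0,…,x_n] be a polynomial ring over a field F of characteristic p > 0, with homogeneous maximal ideal m = (x_0,…,x_n). Then for each q = p^e (e ≥ 0) and each integer N ≥ 0, the colon ideal satisfies m^{[q]} :_S m^N = m^{(n+1)q − n − N} + m^{[q]}, with the convention that m^i = S for i ≤ 0. -/
open MvPolynomial

section Aux

variable {R : Type*} [CommSemiring R] {k : ℕ}

/-- If `N ≤ ∑ c i`, there is `b ≤ c` pointwise with `∑ b i = N`. -/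
lemma aux_exists_le_sum (c : Fin k → ℕ) (N : ℕ) (h : N ≤ ∑ i, c i) :
    ∃ b : Fin k → ℕ, (∀ i, b i ≤ c i) ∧ ∑ i, b i = N := by
  induction N with
  | zero => exact ⟨0, fun i => Nat.zero_le _, by simp⟩
  | succ N ih =>
    obtain ⟨b, hb, hsum⟩ := ih (le_trans (Nat.le_succ N) h)
    have hex : ∃ i, b i < c i := by
      by_contra hc
      push_neg at hc
      have : ∑ i, c i ≤ ∑ i, b i := Finset.sum_le_sum fun i _ => hc i
      omega
    obtain ⟨i, hi⟩ := hex
    refine ⟨Function.update b i (b i + 1), fun j => ?_, ?_⟩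
    · rcases eq_or_ne j i with rfl | hj
      · simpa using hi
      · simp [Function.update_of_ne hj, hb j]
    · classical
      rw [Finset.sum_update_of_mem (Finset.mem_univ i)]
      have : ∑ j ∈ Finset.univ \ {i}, b j + b i = ∑ j, b j := by
        rw [Finset.sdiff_singleton_eq_erase, add_comm,
          Finset.add_sum_erase _ _ (Finset.mem_univ i)]
      omega

/-- membership in the ideal generated by `q`-th powers of variables -/
lemma aux_mem_mq (q : ℕ) (f : MvPolynomial (Fin k) R) :
    f ∈ Ideal.span (Set.range fun i : Fin k => (X i : MvPolynomial (Fin k) R) ^ q) ↔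
      ∀ a ∈ f.support, ∃ i, q ≤ a i := by
  have himg : (Set.range fun i : Fin k => (X i : MvPolynomial (Fin k) R) ^ q) =
      (fun s => monomial s (1 : R)) '' (Set.range fun i : Fin k => Finsupp.single i q) := by
    ext x
    constructor
    · rintro ⟨i, rfl⟩
      exact ⟨Finsupp.single i q, ⟨i, rfl⟩, (X_pow_eq_monomial).symm⟩
    · rintro ⟨s, ⟨i, rfl⟩, rfl⟩
      exact ⟨i, X_pow_eq_monomial⟩
  rw [himg, mem_ideal_span_monomial_image]
  constructor
  · intro h a ha
    obtain ⟨si, ⟨i, rfl⟩, hle⟩ := h a ha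
    exact ⟨i, (Finsupp.single_le_iff).1 hle⟩
  · intro h a ha
    obtain ⟨i, hi⟩ := h a ha
    exact ⟨Finsupp.single i q, ⟨i, rfl⟩, (Finsupp.single_le_iff).2 hi⟩

/-- the ideal of polynomials supported in degrees `≥ K` -/
noncomputable def auxJ (R : Type*) [CommSemiring R] (k K : ℕ) :
    Ideal (MvPolynomial (Fin k) R) :=
  Ideal.span ((fun s => monomial s (1 : R)) '' {a : Fin k →₀ ℕ | K ≤ ∑ i, a i})

lemma aux_mem_J {K : ℕ} (f : MvPolynomial (Fin k) R) :
    f ∈ auxJ R k K ↔ ∀ a ∈ f.support, K ≤ ∑ i, a i := by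
  rw [auxJ, mem_ideal_span_monomial_image]
  constructor
  · intro h a ha
    obtain ⟨si, hsi, hle⟩ := h a ha
    exact le_trans hsi (Finset.sum_le_sum fun i _ => hle i)
  · intro h a ha
    exact ⟨a, h a ha, le_rfl⟩

lemma aux_J_mul {K L : ℕ} : auxJ R k K * auxJ R k L ≤ auxJ R k (K + L) := by
  classical
  rw [Ideal.mul_le]
  intro f hf g hg
  rw [aux_mem_J] at hf hg ⊢
  intro a ha
  have := MvPolynomial.support_mul f g ha
  rw [Finset.mem_add] at this
  obtain ⟨b, hb, c, hc, rfl⟩ := this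
  have h1 := hf b hb
  have h2 := hg c hc
  have : ∑ i, (b + c) i = ∑ i, b i + ∑ i, c i := by
    simp [Finset.sum_add_distrib]
  omega

lemma aux_monomial_one_mem (a : Fin k →₀ ℕ) :
    (monomial a (1 : R)) ∈
      (Ideal.span (Set.range (X : Fin k → MvPolynomial (Fin k) R))) ^ (∑ i, a i) := by
  rw [monomial_eq, C_1, one_mul,
    Finsupp.prod_fintype _ _ (fun i => pow_zero _)]
  rw [← Finset.prod_pow_eq_pow_sum Finset.univ a
      (Ideal.span (Set.range (X : Fin k → MvPolynomial (Fin k) R)))]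
  exact Ideal.prod_mem_prod fun i _ =>
    Ideal.pow_mem_pow (Ideal.subset_span (Set.mem_range_self i)) _

lemma aux_pow_le_J (K : ℕ) :
    (Ideal.span (Set.range (X : Fin k → MvPolynomial (Fin k) R))) ^ K ≤ auxJ R k K := by
  induction K with
  | zero =>
    intro f _
    rw [aux_mem_J]
    intro a _
    exact Nat.zero_le _
  | succ K ih =>
    have hm : Ideal.span (Set.range (X : Fin k → MvPolynomial (Fin k) R)) ≤ auxJ R k 1 := by
      rw [Ideal.span_le]
      rintro x ⟨i, rfl⟩
      have : (X i : MvPolynomial (Fin k) R) = monomial (Finsupp.single i 1) 1 := by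
        rw [← X_pow_eq_monomial, pow_one]
      rw [this]
      exact Ideal.subset_span ⟨Finsupp.single i 1, by simp, rfl⟩
    calc (Ideal.span (Set.range (X : Fin k → MvPolynomial (Fin k) R))) ^ (K + 1)
        = (Ideal.span (Set.range (X : Fin k → MvPolynomial (Fin k) R))) ^ K *
          Ideal.span (Set.range (X : Fin k → MvPolynomial (Fin k) R)) := pow_succ _ _
      _ ≤ auxJ R k K * auxJ R k 1 := Ideal.mul_mono ih hm
      _ ≤ auxJ R k (K + 1) := aux_J_mul

end Aux

/-- **Lemma 2.2.** Let `S = F[x_0, …, x_n]` over a field of characteristic `p > 0`, with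
homogeneous maximal ideal `m`. For `q = p^e` and `N ≥ 0` one has
`m^{[q]} :_S m^N = m^((n+1)q - n - N) + m^{[q]}`, with the convention `m^i = S` for `i ≤ 0`. -/
theorem stmt_1 {F : Type*} [Field F] (p : ℕ) (hp : p.Prime) [CharP F p]
    (n e N : ℕ)
    (m mq : Ideal (MvPolynomial (Fin (n + 1)) F))
    (hm : m = Ideal.span (Set.range X))
    (hmq : mq = Ideal.span (Set.range fun i => X i ^ p ^ e)) :
    mq.colon (((m ^ N : Ideal (MvPolynomial (Fin (n + 1)) F))) : Set (MvPolynomial (Fin (n + 1)) F)) =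
      m ^ ((((n : ℤ) + 1) * (p : ℤ) ^ e - n - N).toNat) + mq := by
  classical
  subst hm hmq
  set q : ℕ := p ^ e with hq
  have hq1 : 1 ≤ q := Nat.one_le_pow _ _ hp.pos
  set m : Ideal (MvPolynomial (Fin (n + 1)) F) := Ideal.span (Set.range X) with hm
  set mq : Ideal (MvPolynomial (Fin (n + 1)) F) :=
    Ideal.span (Set.range fun i => X i ^ q) with hmq
  set D : ℕ := (((n : ℤ) + 1) * (p : ℤ) ^ e - n - N).toNat with hD
  set M : ℕ := (n + 1) * q with hM
  have hMz : (M : ℤ) = ((n : ℤ) + 1) * (p : ℤ) ^ e := by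
    rw [hM, hq]; push_cast; ring
  -- key arithmetic facts about D
  have hD_ge : (M : ℤ) - n - N ≤ (D : ℤ) := by
    rw [hD, hMz]; exact Int.self_le_toNat _
  have hM_ge : n + 1 ≤ M := by
    rw [hM]; exact Nat.le_mul_of_pos_right _ hq1
  have hM_eq : M = (n + 1) * (q - 1) + (n + 1) := by
    rw [hM]
    have hq' : q = (q - 1) + 1 := by omega
    rw [hq', Nat.mul_add, mul_one, Nat.add_sub_cancel]
  -- the "big degree implies in mq" fact
  have hJ_le_mq : ∀ K : ℕ, (n + 1) * (q - 1) < K → auxJ F (n + 1) K ≤ mq := by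
    intro K hK f hf
    rw [aux_mem_J] at hf
    rw [hmq, aux_mem_mq]
    intro a ha
    by_contra hc
    push_neg at hc
    have : ∑ i, a i ≤ ∑ _i : Fin (n + 1), (q - 1) :=
      Finset.sum_le_sum fun i _ => by have := hc i; omega
    rw [Finset.sum_const, Finset.card_univ, Fintype.card_fin, smul_eq_mul] at this
    have := hf a ha
    omega
  have hDN : (n + 1) * (q - 1) < D + N := by omega
  apply le_antisymm
  · -- colon ≤ m^D + mq
    intro f hf
    rw [Submodule.mem_colon] at hf
    -- decompose f into monomials
    rw [f.as_sum]
    apply Ideal.sum_mem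
    intro a ha
    -- each monomial is either in mq or in m^D
    have key : (∃ i, q ≤ a i) ∨ D ≤ ∑ i, a i := by
      by_contra hc
      push_neg at hc
      obtain ⟨hlt, hdeg⟩ := hc
      -- D > ∑ a i ≥ 0, so D > 0 and (D:ℤ) equals the difference exactly
      have hDpos : 0 < D := lt_of_le_of_lt (Nat.zero_le _) hdeg
      have hDz : (D : ℤ) = (M : ℤ) - n - N := by
        rcases le_or_gt 0 (((n : ℤ) + 1) * (p : ℤ) ^ e - n - N) with h | h
        · rw [hD, Int.toNat_of_nonneg h, hMz]
        · rw [hD] at hDpos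
          rw [Int.toNat_of_nonpos h.le] at hDpos
          exact absurd hDpos (lt_irrefl 0)
      -- choose b with ∑ b = N, a i + b i < q
      have hsum_bound : N ≤ ∑ i, (q - 1 - a i) := by
        have h1 : ∑ i, (q - 1 - a i) + ∑ i, a i = (n + 1) * (q - 1) := by
          rw [← Finset.sum_add_distrib]
          have : ∀ i : Fin (n + 1), q - 1 - a i + a i = q - 1 := by
            intro i; have := hlt i; omega
          simp_rw [this, Finset.sum_const, Finset.card_univ, Fintype.card_fin, smul_eq_mul]
        have h2 : (∑ i, a i : ℤ) < (D : ℤ) := by exact_mod_cast hdeg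
        omega
      obtain ⟨b, hb_le, hb_sum⟩ := aux_exists_le_sum _ N hsum_bound
      set bf : Fin (n + 1) →₀ ℕ := Finsupp.equivFunOnFinite.symm b with hbf
      have hbf_apply : ∀ i, bf i = b i := fun i => rfl
      have hbf_mem : (monomial bf (1 : F)) ∈ m ^ N := by
        have := aux_monomial_one_mem (R := F) bf
        rwa [show ∑ i, bf i = N by rw [← hb_sum]; exact Finset.sum_congr rfl fun i _ => rfl]
          at this
      have hfg := hf _ hbf_mem
      rw [smul_eq_mul, hmq, aux_mem_mq] at hfg
      have hcoeff : coeff (a + bf) (f * monomial bf 1) = coeff a f := by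
        rw [coeff_mul_monomial, mul_one]
      have hmem_supp : a + bf ∈ (f * monomial bf 1).support := by
        rw [mem_support_iff, hcoeff]
        exact mem_support_iff.1 ha
      obtain ⟨i, hi⟩ := hfg _ hmem_supp
      have h1 := hlt i
      have h2 := hb_le i
      have : (a + bf) i = a i + b i := by simp [hbf_apply]
      omega
    rcases key with ⟨i, hi⟩ | hdeg
    · -- monomial ∈ mq
      apply Ideal.mem_sup_right
      rw [hmq, aux_mem_mq]
      intro x hx
      have := support_monomial_subset hx
      rw [Finset.mem_singleton] at this
      subst this
      exact ⟨i, hi⟩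
    · -- monomial ∈ m^D
      apply Ideal.mem_sup_left
      have h1 : (monomial a (1 : F)) ∈ m ^ (∑ i, a i) := aux_monomial_one_mem a
      have h2 : m ^ (∑ i, a i) ≤ m ^ D := Ideal.pow_le_pow_right hdeg
      have h3 : (monomial a (coeff a f)) = C (coeff a f) * monomial a 1 := by
        rw [C_mul_monomial, mul_one]
      rw [h3]
      exact Ideal.mul_mem_left _ _ (h2 h1)
  · -- m^D + mq ≤ colon
    apply sup_le
    · intro f hf
      rw [Submodule.mem_colon]
      intro g hg
      rw [smul_eq_mul]
      have : f * g ∈ m ^ D * m ^ N := Ideal.mul_mem_mul hf hg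
      rw [← pow_add] at this
      exact hJ_le_mq (D + N) hDN (aux_pow_le_J (D + N) this)
    · intro f hf
      rw [Submodule.mem_colon]
      intro g _
      rw [smul_eq_mul]
      exact Ideal.mul_mem_right _ _ hf
end

section
/- Let S = F[x_0,…,x_n] be a polynomial ring over a field F of characteristic p > 0 with p ≥ n and n ≥ 1, and let m = (x_0,…,x_n). Let f ∈ S be homogeneous of degree d whose Jacobian ideal J = (∂f/∂x_0,…,∂f/∂x_n) satisfies m^{n(d−2)+d} ⊆ J + fS (as holds when Proj S/fS is smooth). Let q = p^e with e ≥ 1, and let s ∈ S be homogeneous of degree (n+1)q/p − d such that s^p ∉ m^{[q]}. Then f^{p−n} s^p ∉ m^{[q]}. -/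
open MvPolynomial


private lemma exists_le_sum_aux {m : ℕ} (c : Fin m → ℕ) (N : ℕ) (h : N ≤ ∑ i, c i) :
    ∃ b : Fin m → ℕ, (∀ i, b i ≤ c i) ∧ ∑ i, b i = N := by
  induction N with
  | zero => exact ⟨0, fun i => Nat.zero_le _, by simp⟩
  | succ N ih =>
    obtain ⟨b, hb, hsum⟩ := ih (Nat.le_of_succ_le h)
    have hex : ∃ i, b i < c i := by
      by_contra hc
      push_neg at hc
      have : ∑ i, c i ≤ ∑ i, b i := Finset.sum_le_sum fun i _ => hc i
      omega
    obtain ⟨i, hi⟩ := hex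
    refine ⟨Function.update b i (b i + 1), fun j => ?_, ?_⟩
    · rcases eq_or_ne j i with rfl | hj
      · simpa using hi
      · simp [Function.update_of_ne hj, hb j]
    · rw [Finset.sum_update_of_mem (Finset.mem_univ i), Finset.sdiff_singleton_eq_erase]
      have h2 : b i + ∑ x ∈ Finset.univ.erase i, b x = N := by
        rw [Finset.add_sum_erase _ b (Finset.mem_univ i)]; exact hsum
      omega

private lemma mem_span_Xpow_iff {F : Type*} [Field F] {n q : ℕ} (x : MvPolynomial (Fin n) F) :
    x ∈ Ideal.span (Set.range fun i => (X i : MvPolynomial (Fin n) F) ^ q) ↔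
      ∀ a ∈ x.support, ∃ i, q ≤ a i := by
  have h1 : (Set.range fun i => (X i : MvPolynomial (Fin n) F) ^ q)
      = (fun s => monomial s (1 : F)) '' (Set.range fun i => Finsupp.single i q) := by
    rw [← Set.range_comp]
    refine congrArg Set.range (funext fun i => ?_)
    exact X_pow_eq_monomial
  rw [h1, mem_ideal_span_monomial_image]
  constructor
  · intro hh a ha
    obtain ⟨si, ⟨i, rfl⟩, hle⟩ := hh a ha
    exact ⟨i, Finsupp.single_le_iff.mp hle⟩
  · intro hh a ha
    obtain ⟨i, hle⟩ := hh a ha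
    exact ⟨Finsupp.single i q, ⟨i, rfl⟩, Finsupp.single_le_iff.mpr hle⟩

private lemma sum_eq_of_mem_support {F : Type*} [Field F] {n D : ℕ}
    {g : MvPolynomial (Fin n) F} (hg : g.IsHomogeneous D) {a} (ha : a ∈ g.support) :
    ∑ i, a i = D := by
  have h1 : Finsupp.degree a = D := by
    have h2 := hg (mem_support_iff.mp ha)
    rw [Finsupp.degree_eq_weight_one]
    exact h2
  rw [← h1, Finsupp.degree]
  exact (Finset.sum_subset (Finset.subset_univ _)
    (fun i _ hi => Finsupp.notMem_support_iff.mp hi)).symm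

private lemma mem_of_mul_mem {F : Type*} [Field F] {n q N D : ℕ}
    {g : MvPolynomial (Fin n) F} (hg : g.IsHomogeneous D)
    (hD : D + N ≤ n * (q - 1)) (hq : 1 ≤ q)
    (hmul : ∀ h ∈ (Ideal.span (Set.range X) : Ideal (MvPolynomial (Fin n) F)) ^ N,
      h * g ∈ Ideal.span (Set.range fun i => (X i : MvPolynomial (Fin n) F) ^ q)) :
    g ∈ Ideal.span (Set.range fun i => (X i : MvPolynomial (Fin n) F) ^ q) := by
  rw [mem_span_Xpow_iff]
  intro a ha
  by_contra hc
  push_neg at hc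
  have hsum : ∑ i, a i = D := sum_eq_of_mem_support hg ha
  have hN : N ≤ ∑ i, (q - 1 - a i) := by
    have h3 : ∀ i : Fin n, a i + (q - 1 - a i) = q - 1 := fun i => by
      have := hc i; omega
    have h4 : (∑ i, a i) + (∑ i, (q - 1 - a i)) = n * (q - 1) := by
      rw [← Finset.sum_add_distrib]
      simp [h3, Finset.sum_const, Finset.card_univ]
    omega
  obtain ⟨b, hb, hbsum⟩ := exists_le_sum_aux _ N hN
  set B : Fin n →₀ ℕ := Finsupp.equivFunOnFinite.symm b with hBdef
  have hBapp : ∀ i, B i = b i := fun i => rfl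
  have h0 : monomial B (1 : F) = ∏ i : Fin n, X i ^ b i := by
    rw [← prod_X_pow_eq_monomial]
    refine Finset.prod_subset (Finset.subset_univ _) (fun i _ hi => ?_) |>.trans ?_
    · rw [Finsupp.notMem_support_iff.mp hi, pow_zero]
    · exact Finset.prod_congr rfl fun i _ => by rw [hBapp]
  have h1 : monomial B (1 : F) ∈ (Ideal.span (Set.range X) : Ideal (MvPolynomial (Fin n) F)) ^ N := by
    rw [h0, ← hbsum, ← Finset.prod_pow_eq_pow_sum]
    exact Ideal.prod_mem_prod fun i _ => Ideal.pow_mem_pow (Ideal.subset_span (Set.mem_range_self i)) _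
  have h2 := hmul _ h1
  rw [mem_span_Xpow_iff] at h2
  have h3 : B + a ∈ (monomial B (1 : F) * g).support := by
    rw [mem_support_iff, coeff_monomial_mul, one_mul]
    exact mem_support_iff.mp ha
  obtain ⟨i, hqle⟩ := h2 _ h3
  have : (B + a) i = b i + a i := by simp [hBapp]
  have := hb i
  have := hc i
  omega

/-- **Algebraic core of Theorem 1.2(2).** Let `S = F[x_0, …, x_n]`, `char F = p ≥ n`,
`n ≥ 1`, and let `f` be homogeneous of degree `d` with Jacobian ideal `J` satisfying
`m^(n(d-2)+d) ⊆ J + fS`.  Let `q = p^(e+1)` (so `e + 1 ≥ 1`, i.e. `q` is a power of `p`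
divisible by `p`), and let `s` be homogeneous of degree `(n+1)q/p - d` with
`s^p ∉ m^{[q]}`.  Then `f^(p-n) * s^p ∉ m^{[q]}`. -/
theorem stmt_3 {F : Type*} [Field F] (p : ℕ) (hp : p.Prime) [CharP F p]
    (n d e Ds : ℕ) (hn : 1 ≤ n) (hpn : n ≤ p)
    (f s : MvPolynomial (Fin (n + 1)) F)
    (hf : f.IsHomogeneous d)
    (m J mq : Ideal (MvPolynomial (Fin (n + 1)) F))
    (hm : m = Ideal.span (Set.range X))
    (hJ : J = Ideal.span (Set.range fun i => pderiv i f))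
    (hJac : m ^ (((n : ℤ) * ((d : ℤ) - 2) + d).toNat) ≤ J + Ideal.span {f})
    (hmq : mq = Ideal.span (Set.range fun i => X i ^ p ^ (e + 1)))
    (hDs : (Ds : ℤ) = ((n : ℤ) + 1) * (p : ℤ) ^ e - d)
    (hs : s.IsHomogeneous Ds)
    (hsq : s ^ p ∉ mq) :
    f ^ (p - n) * s ^ p ∉ mq := by
  subst hm hJ hmq
  intro hcon
  have hp2 := hp.two_le
  have hq1 : 1 ≤ p ^ (e + 1) := Nat.one_le_pow _ _ (by omega)
  by_cases hnp : n = p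
  · have h0 : p - n = 0 := by omega
    rw [h0, pow_zero, one_mul] at hcon; exact hsq hcon
  have hnp' : n < p := lt_of_le_of_ne hpn hnp
  by_cases hd0 : d = 0
  · -- then s ^ p is homogeneous of degree (n+1) p^(e+1), above the socle, so s^p ∈ mq
    apply hsq
    rw [mem_span_Xpow_iff]
    intro a ha
    have hsum := sum_eq_of_mem_support (hs.pow p) ha
    by_contra hc
    push_neg at hc
    have hle : ∑ i : Fin (n + 1), a i ≤ (n + 1) * (p ^ (e + 1) - 1) := by
      calc ∑ i : Fin (n + 1), a i ≤ ∑ _i : Fin (n + 1), (p ^ (e + 1) - 1) :=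
            Finset.sum_le_sum fun i _ => by have := hc i; omega
        _ = (n + 1) * (p ^ (e + 1) - 1) := by
            rw [Finset.sum_const, Finset.card_univ, Fintype.card_fin, smul_eq_mul]
    have hDsp : ((Ds * p : ℕ) : ℤ) = (((n + 1) * p ^ (e + 1) : ℕ) : ℤ) := by
      push_cast; rw [hDs]; subst hd0; push_cast; ring
    have hDsp' : Ds * p = (n + 1) * p ^ (e + 1) := by exact_mod_cast hDsp
    have hlt : (n + 1) * (p ^ (e + 1) - 1) < (n + 1) * p ^ (e + 1) :=
      mul_lt_mul_of_pos_left (by omega) (by omega)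
    omega
  -- main case : 1 ≤ d, n < p
  have hder : ∀ (i : Fin (n + 1)) (x : MvPolynomial (Fin (n + 1)) F),
      x ∈ Ideal.span (Set.range fun i => (X i : MvPolynomial (Fin (n + 1)) F) ^ p ^ (e + 1)) →
      pderiv i x ∈ Ideal.span (Set.range fun i => (X i : MvPolynomial (Fin (n + 1)) F) ^ p ^ (e + 1)) := by
    intro i x hx
    induction hx using Submodule.span_induction with
    | mem y hy =>
      obtain ⟨j, rfl⟩ := hy
      rw [pderiv_pow, Nat.cast_pow, CharP.cast_eq_zero, zero_pow (by omega), zero_mul, zero_mul]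
      exact zero_mem _
    | zero => rw [map_zero]; exact zero_mem _
    | add a b _ _ ha hb => rw [map_add]; exact add_mem ha hb
    | smul r y hy hpy =>
      rw [smul_eq_mul, pderiv_mul]
      exact add_mem (Ideal.mul_mem_left _ _ hy) (Ideal.mul_mem_left _ _ hpy)
  have hsp : ∀ i : Fin (n + 1), pderiv i (s ^ p) = 0 := by
    intro i
    rw [pderiv_pow, CharP.cast_eq_zero (MvPolynomial (Fin (n + 1)) F) p, zero_mul, zero_mul]
  have key : ∀ t : ℕ, t ≤ p - n →
      f ^ t * s ^ p ∈ Ideal.span (Set.range fun i => (X i : MvPolynomial (Fin (n + 1)) F) ^ p ^ (e + 1)) →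
      False := by
    intro t
    induction t with
    | zero => intro _ h0; rw [pow_zero, one_mul] at h0; exact hsq h0
    | succ t ih =>
      intro ht hmem
      apply ih (Nat.le_of_succ_le ht)
      -- step 1: partial derivatives
      have hstep : ∀ i : Fin (n + 1), f ^ t * pderiv i f * s ^ p ∈
          Ideal.span (Set.range fun i => (X i : MvPolynomial (Fin (n + 1)) F) ^ p ^ (e + 1)) := by
        intro i
        have h1 := hder i _ hmem
        rw [pderiv_mul, hsp, mul_zero, add_zero, pderiv_pow, Nat.add_sub_cancel] at h1
        have hc0 : ((t + 1 : ℕ) : F) ≠ 0 := by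
          rw [Ne, CharP.cast_eq_zero_iff F p (t + 1)]
          intro hdvd
          have := Nat.le_of_dvd (Nat.succ_pos t) hdvd
          omega
        rw [← map_natCast (C : F →+* MvPolynomial (Fin (n + 1)) F) (t + 1),
          mul_assoc, mul_assoc] at h1
        have hu : IsUnit (C ((t + 1 : ℕ) : F) : MvPolynomial (Fin (n + 1)) F) :=
          isUnit_iff_exists_inv.mpr ⟨C (((t + 1 : ℕ) : F))⁻¹,
            by rw [← C_mul, mul_inv_cancel₀ hc0, C_1]⟩
        rw [Ideal.unit_mul_mem_iff_mem _ hu, ← mul_assoc] at h1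
        exact h1
      -- step 2: colon ideal
      have hcolon : (Ideal.span (Set.range X) : Ideal (MvPolynomial (Fin (n + 1)) F)) ^
            (((n : ℤ) * ((d : ℤ) - 2) + d).toNat) ≤
          Submodule.colon (Ideal.span (Set.range fun i => (X i : MvPolynomial (Fin (n + 1)) F) ^ p ^ (e + 1)))
            (Ideal.span {f ^ t * s ^ p}) := by
        refine le_trans hJac ?_
        rw [Ideal.add_eq_sup, sup_le_iff]
        constructor
        · rw [Ideal.span_le]
          rintro _ ⟨i, rfl⟩
          simp only [SetLike.mem_coe, Ideal.mem_colon_span_singleton]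
          rw [show pderiv i f * (f ^ t * s ^ p) = f ^ t * pderiv i f * s ^ p by ring]
          exact hstep i
        · rw [Ideal.span_le, Set.singleton_subset_iff]
          simp only [SetLike.mem_coe, Ideal.mem_colon_span_singleton]
          rw [show f * (f ^ t * s ^ p) = f ^ (t + 1) * s ^ p by ring]
          exact hmem
      -- step 3: degree bound + monomial lemma
      refine mem_of_mul_mem ((hf.pow t).mul (hs.pow p)) ?_ hq1
        (fun h hh => Ideal.mem_colon_span_singleton.mp (hcolon hh))
      -- degree bound : d*t + Ds*p + N ≤ (n+1)*(p^(e+1)-1)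
      have hw : ((((n : ℤ) * ((d : ℤ) - 2) + d).toNat : ℤ)) = max ((n : ℤ) * ((d : ℤ) - 2) + d) 0 :=
        Int.toNat_eq_max _
      zify [hq1]
      rw [hw]
      have hP : ((p : ℤ)) ^ (e + 1) = (p : ℤ) * (p : ℤ) ^ e := by ring
      have hDs' : (Ds : ℤ) * p = ((n : ℤ) + 1) * ((p : ℤ) ^ (e + 1)) - d * p := by
        rw [hDs, hP]; ring
      have ht' : (t : ℤ) ≤ (p : ℤ) - n - 1 := by
        have : t + 1 ≤ p - n := ht
        omega
      have hd1 : (1 : ℤ) ≤ d := by exact_mod_cast Nat.one_le_iff_ne_zero.mpr hd0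
      have hn1 : (1 : ℤ) ≤ n := by exact_mod_cast hn
      rcases le_or_gt 0 ((n : ℤ) * ((d : ℤ) - 2) + d) with hpos | hneg
      · rw [max_eq_left hpos]
        have hkey : (d : ℤ) * ((t : ℤ) - p + n + 1) ≤ 0 :=
          mul_nonpos_of_nonneg_of_nonpos (by linarith) (by linarith)
        nlinarith [hkey, hDs']
      · rw [max_eq_right (le_of_lt hneg)]
        have hkey : (d : ℤ) * ((t : ℤ) - p) ≤ (t : ℤ) - p :=
          le_of_sub_nonneg (by nlinarith)
        nlinarith [hkey, hDs']
  exact key (p - n) le_rfl hcon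
end

section
/- Fix integers n ≥ 2 and d ≥ n+1, let F be a field of characteristic p > 0 where p is a prime with p ≡ −1 (mod d), and set f := x_0^d + ⋯ + x_n^d in S = F[x_0,…,x_n]. Then x_0^{np} belongs to the ideal (x_1^p, …, x_n^p, f^{n−1}) of S. -/
open MvPolynomial

private lemma pow_mem_of_pow_mem' {R : Type*} [CommRing R] (J : Ideal R) {z : R} {e k : ℕ}
    (h : z ^ e ∈ J) (hk : e ≤ k) : z ^ k ∈ J := by
  rw [← Nat.sub_add_cancel hk, pow_add]
  exact J.mul_mem_left _ h

private lemma sum_pow_mem' {R : Type*} [CommRing R] (J : Ideal R) {e : ℕ} (he : 1 ≤ e) :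
    ∀ (m : ℕ) (z : Fin m → R), (∀ i, z i ^ e ∈ J) →
      (∑ i, z i) ^ (m * (e - 1) + 1) ∈ J := by
  intro m
  induction m with
  | zero => intro z _; simp
  | succ m ih =>
    intro z hz
    rw [Fin.sum_univ_succ]
    set a := z 0 with ha
    set s := ∑ i : Fin m, z i.succ with hs
    have hsJ : s ^ (m * (e - 1) + 1) ∈ J := ih (fun i => z i.succ) (fun i => hz i.succ)
    rw [add_pow]
    refine Ideal.sum_mem _ (fun j hj => ?_)
    rcases le_or_gt e j with hje | hje
    · exact Ideal.mul_mem_right _ _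
        (Ideal.mul_mem_right _ _ (pow_mem_of_pow_mem' J (hz 0) hje))
    · have hle : m * (e - 1) + 1 ≤ (m + 1) * (e - 1) + 1 - j := by
        have h1 : (m + 1) * (e - 1) = m * (e - 1) + (e - 1) := by ring
        omega
      exact Ideal.mul_mem_right _ _
        (Ideal.mul_mem_left _ _ (pow_mem_of_pow_mem' J hsJ hle))

/-- **Example 3.2 (key computation).** Fix `n ≥ 2` and `d ≥ n+1`, let `F` have
characteristic `p` where `p` is prime with `p ≡ -1 (mod d)`, and set
`f := x_0^d + ⋯ + x_n^d` in `S = F[x_0, …, x_n]`. Then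
`x_0^(n*p) ∈ (x_1^p, …, x_n^p, f^(n-1))`. -/
theorem stmt_4 {F : Type*} [Field F] (p n d : ℕ) (hp : p.Prime) [CharP F p]
    (hn : 2 ≤ n) (hd : n + 1 ≤ d) (hpd : (p + 1) % d = 0)
    (f : MvPolynomial (Fin (n + 1)) F)
    (hf : f = ∑ i, X i ^ d) :
    X 0 ^ (n * p) ∈
      Ideal.span ((Set.range fun i : Fin n => X (i.succ) ^ p) ∪ {f ^ (n - 1)}) := by
  set J : Ideal (MvPolynomial (Fin (n + 1)) F) :=
    Ideal.span (Set.range fun i : Fin n => X (i.succ) ^ p) with hJ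
  set I : Ideal (MvPolynomial (Fin (n + 1)) F) :=
    Ideal.span ((Set.range fun i : Fin n => X (i.succ) ^ p) ∪ {f ^ (n - 1)}) with hI
  have hJI : J ≤ I := Ideal.span_mono Set.subset_union_left
  have hfI : f ^ (n - 1) ∈ I :=
    Ideal.subset_span (Set.mem_union_right _ rfl)
  -- set up e with d * e = p + 1
  have hdvd : d ∣ p + 1 := Nat.dvd_of_mod_eq_zero hpd
  obtain ⟨e, hde⟩ := hdvd
  have hp1 : 2 ≤ p := hp.two_le
  have he : 1 ≤ e := Nat.pos_of_ne_zero (by rintro rfl; simp at hde)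
  -- b := sum of the other d-th powers
  set b : MvPolynomial (Fin (n+1)) F := ∑ i : Fin n, X (i.succ : Fin (n + 1)) ^ d with hb
  have hfb : f = X 0 ^ d + b := by rw [hf, Fin.sum_univ_succ]
  -- each (X i.succ ^ d) ^ e ∈ J
  have hze : ∀ i : Fin n, ((X (i.succ : Fin (n + 1)) : MvPolynomial (Fin (n+1)) F) ^ d) ^ e ∈ J := by
    intro i
    have hXp : (X (i.succ : Fin (n + 1)) : MvPolynomial (Fin (n+1)) F) ^ p ∈ J :=
      Ideal.subset_span ⟨i, rfl⟩
    have : ((X (i.succ : Fin (n + 1)) : MvPolynomial (Fin (n+1)) F) ^ d) ^ e = X i.succ * X i.succ ^ p := by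
      rw [← pow_mul, ← hde, pow_succ']
    rw [this]
    exact J.mul_mem_left _ hXp
  have hbk : ∀ k, n * (e - 1) + 1 ≤ k → b ^ k ∈ J := by
    intro k hk
    exact pow_mem_of_pow_mem' J (sum_pow_mem' J he n _ hze) hk
  -- exponent bookkeeping
  set q := n * e - 1 with hq
  have hne1 : 1 ≤ n * e := by nlinarith
  have hq1 : q + 1 = n * e := by omega
  have hdq : d * (q + 1) = n * p + n := by
    rw [hq1]
    calc d * (n * e) = n * (d * e) := by ring
    _ = n * p + n := by rw [← hde]; ring
  have hexp : (d - n) + d * q = n * p := by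
    have h2 : d * (q + 1) = d * q + d := by ring
    omega
  have hnee : n * (e - 1) + n = n * e := by
    obtain ⟨e', rfl⟩ : ∃ e', e = e' + 1 := ⟨e - 1, by omega⟩
    have h3 : e' + 1 - 1 = e' := rfl
    rw [h3]; ring
  -- the key identity
  have hx : (X 0 ^ d : MvPolynomial (Fin (n+1)) F) = f + (-b) := by rw [hfb]; ring
  have hkey : (X 0 ^ (n * p) : MvPolynomial (Fin (n+1)) F) =
      X 0 ^ (d - n) *
        ∑ j ∈ Finset.range (q + 1), f ^ j * (-b) ^ (q - j) * (q.choose j : MvPolynomial (Fin (n+1)) F) := by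
    rw [← add_pow, ← hx, ← pow_mul, ← pow_add, hexp]
  rw [hkey]
  refine Ideal.mul_mem_left _ _ (Ideal.sum_mem _ (fun j hj => ?_))
  rcases le_or_gt (n - 1) j with hjn | hjn
  · exact Ideal.mul_mem_right _ _
      (Ideal.mul_mem_right _ _ (pow_mem_of_pow_mem' I hfI hjn))
  · have hle : n * (e - 1) + 1 ≤ q - j := by omega
    have : (-b) ^ (q - j) = (-1 : MvPolynomial (Fin (n+1)) F) ^ (q - j) * b ^ (q - j) := by
      rw [neg_pow]
    rw [this]
    exact Ideal.mul_mem_right _ _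
      (Ideal.mul_mem_left _ _ (Ideal.mul_mem_left _ _ (hJI (hbk _ hle))))
end

section
/- Let F be a field, let n ≥ 2 and k ≥ 1 be integers, and consider the polynomial ring F[y_0,…,y_n]. Then y_0^{nk−1} belongs to the ideal (y_1^k, …, y_n^k, (y_0 + y_1 + ⋯ + y_n)^{n−1}). -/
open MvPolynomial

private lemma aux_add_pow_mem {R : Type*} [CommRing R] {I : Ideal R} {a b : R} {p q m : ℕ}
    (ha : a ^ p ∈ I) (hb : b ^ q ∈ I) (h : p + q ≤ m + 1) : (a + b) ^ m ∈ I := by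
  rw [add_pow]
  apply Ideal.sum_mem
  intro i hi
  rcases le_or_gt p i with hpi | hpi
  · have : a ^ i ∈ I := by
      rw [← Nat.sub_add_cancel hpi, pow_add]
      exact Ideal.mul_mem_left _ _ ha
    exact Ideal.mul_mem_right _ _ (Ideal.mul_mem_right _ _ this)
  · have hmi : q ≤ m - i := by
      have := Finset.mem_range.mp hi
      omega
    have : b ^ (m - i) ∈ I := by
      rw [← Nat.sub_add_cancel hmi, pow_add]
      exact Ideal.mul_mem_left _ _ hb
    exact Ideal.mul_mem_right _ _ (Ideal.mul_mem_left _ _ this)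

private lemma aux_sum_pow_mem {R : Type*} [CommRing R] {I : Ideal R} {ι : Type*}
    (s : Finset ι) (f : ι → R) (k : ℕ) (hf : ∀ i ∈ s, f i ^ k ∈ I) :
    (∑ i ∈ s, f i) ^ (s.card * (k - 1) + 1) ∈ I := by
  classical
  induction s using Finset.induction_on with
  | empty => simp
  | @insert a s ha ih =>
    rw [Finset.sum_insert ha, Finset.card_insert_of_notMem ha]
    apply aux_add_pow_mem (hf a (Finset.mem_insert_self a s))
      (ih fun i hi => hf i (Finset.mem_insert_of_mem hi))
    have : (s.card + 1) * (k - 1) = s.card * (k - 1) + (k - 1) := by ring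
    rw [this]
    omega

/-- **Example 3.2 (final reduction).** Let `F` be a field, `n ≥ 2`, `k ≥ 1`, and consider
`F[y_0, …, y_n]`. Then `y_0^(nk-1) ∈ (y_1^k, …, y_n^k, (y_0 + ⋯ + y_n)^(n-1))`. -/
theorem stmt_5 {F : Type*} [Field F] (n k : ℕ) (hn : 2 ≤ n) (hk : 1 ≤ k) :
    (X 0 : MvPolynomial (Fin (n + 1)) F) ^ (n * k - 1) ∈
      Ideal.span ((Set.range fun i : Fin n => (X (i.succ) : MvPolynomial (Fin (n + 1)) F) ^ k)
        ∪ {(∑ i, X i) ^ (n - 1)}) := by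
  set I := Ideal.span ((Set.range fun i : Fin n => (X (i.succ) : MvPolynomial (Fin (n + 1)) F) ^ k)
        ∪ {(∑ i, X i) ^ (n - 1)}) with hI
  have hgen1 : ∀ i : Fin n, (X i.succ : MvPolynomial (Fin (n + 1)) F) ^ k ∈ I :=
    fun i => Ideal.subset_span (Or.inl ⟨i, rfl⟩)
  have hgen2 : ((∑ i, X i : MvPolynomial (Fin (n + 1)) F)) ^ (n - 1) ∈ I :=
    Ideal.subset_span (Or.inr rfl)
  have ht : (∑ i : Fin n, (X i.succ : MvPolynomial (Fin (n + 1)) F)) ^ (n * (k - 1) + 1) ∈ I := by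
    have := aux_sum_pow_mem (I := I) Finset.univ
      (fun i : Fin n => (X i.succ : MvPolynomial (Fin (n + 1)) F)) k (fun i _ => hgen1 i)
    simpa using this
  have hx : (X 0 : MvPolynomial (Fin (n + 1)) F)
      = (∑ i, X i) + (- ∑ i : Fin n, X i.succ) := by
    rw [Fin.sum_univ_succ]; ring
  rw [hx]
  apply aux_add_pow_mem hgen2
  · rw [neg_pow]
    exact Ideal.mul_mem_left _ _ ht
  · obtain ⟨k, rfl⟩ : ∃ k', k = k' + 1 := ⟨k - 1, by omega⟩
    simp only [Nat.add_sub_cancel, Nat.mul_succ]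
    omega
end

section
/- Let p be a prime with p = 4k+1 for a positive integer k, let F be a field of characteristic p, and set f := x_0^4 + x_1^4 + x_2^4 in S = F[x_0, x_1, x_2]. Then f^{3k} does not belong to the ideal (x_0^p, x_1^p, x_2^p) of S. -/
open MvPolynomial

/-- **Example 4.3, case `p ≡ 1 mod 4`.** Let `p = 4k+1` be prime with `k ≥ 1`, let `F`
have characteristic `p`, and set `f := x_0^4 + x_1^4 + x_2^4` in `S = F[x_0, x_1, x_2]`.
Then `f^(3k) ∉ (x_0^p, x_1^p, x_2^p)`. -/
theorem stmt_6 {F : Type*} [Field F] (p k : ℕ) (hk : 1 ≤ k) (hpk : p = 4 * k + 1)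
    (hp : p.Prime) [CharP F p]
    (f : MvPolynomial (Fin 3) F)
    (hf : f = X 0 ^ 4 + X 1 ^ 4 + X 2 ^ 4) :
    f ^ (3 * k) ∉ Ideal.span (Set.range fun i : Fin 3 => X i ^ p) := by
  intro hmem
  rw [Ideal.span, Submodule.mem_span_range_iff_exists_fun] at hmem
  obtain ⟨c, hc⟩ := hmem
  simp only [smul_eq_mul] at hc
  set m : Fin 3 →₀ ℕ := Finsupp.single 0 (4*k) + Finsupp.single 1 (4*k) + Finsupp.single 2 (4*k) with hm
  have hc2 := congrArg (coeff m) hc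
  -- LHS is zero
  have h0 : ∀ i : Fin 3, coeff m (c i * X i ^ p) = 0 := by
    intro i
    rw [X_pow_eq_monomial, coeff_mul_monomial', if_neg]
    intro hle
    have := hle i
    rw [Finsupp.single_eq_same] at this
    have hmi : m i ≤ 4*k := by
      fin_cases i <;> simp [hm, Finsupp.single_apply]
    omega
  rw [coeff_sum, Finset.sum_eq_zero (fun i _ => h0 i)] at hc2
  -- expand f^(3k)
  have hexp : f ^ (3*k) = ∑ j ∈ Finset.range (3*k+1), ∑ i ∈ Finset.range (j+1),
      monomial (Finsupp.single 0 (4*i) + Finsupp.single 1 (4*(j-i)) + Finsupp.single 2 (4*(3*k-j)))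
        ((Nat.choose (3*k) j * Nat.choose j i : F)) := by
    rw [hf, add_pow]
    refine Finset.sum_congr rfl fun j hj => ?_
    rw [add_pow, Finset.sum_mul, Finset.sum_mul]
    refine Finset.sum_congr rfl fun i hi => ?_
    have aux : ∀ (s : Fin 3 →₀ ℕ) (a : F) (n : ℕ),
        (monomial s a : MvPolynomial (Fin 3) F) * (n : MvPolynomial (Fin 3) F)
          = monomial s (a * n) := by
      intro s a n
      rw [← C_eq_coe_nat, mul_comm, C_mul_monomial, mul_comm]
    rw [← pow_mul, ← pow_mul, ← pow_mul, X_pow_eq_monomial, X_pow_eq_monomial, X_pow_eq_monomial,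
      monomial_mul, aux, monomial_mul, aux]
    congr 1
    ring
  have hco : coeff m (f ^ (3*k)) = (((3*k).choose (2*k) * (2*k).choose k : ℕ) : F) := by
    rw [hexp]
    simp only [coeff_sum, coeff_monomial]
    rw [Finset.sum_eq_single (2*k)]
    · rw [Finset.sum_eq_single k]
      · rw [if_pos]
        · push_cast; ring
        · have h1 : 2*k - k = k := by omega
          have h2 : 3*k - 2*k = k := by omega
          rw [h1, h2, hm]
      · intro i hi hik
        rw [if_neg]
        intro hEq
        have h0' := DFunLike.congr_fun hEq (0 : Fin 3)
        simp [hm, Finsupp.single_apply] at h0'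
        omega
      · intro h
        exfalso
        simp at h
        omega
    · intro j hj hjk
      refine Finset.sum_eq_zero fun i hi => ?_
      rw [if_neg]
      intro hEq
      have h2' := DFunLike.congr_fun hEq (2 : Fin 3)
      simp only [Finset.mem_range] at hj
      simp [hm, Finsupp.single_apply] at h2'
      omega
    · intro h
      exfalso
      simp at h
      omega
  rw [hco] at hc2
  have hdvd : p ∣ (3*k).choose (2*k) * (2*k).choose k :=
    (CharP.cast_eq_zero_iff F p _).mp hc2.symm
  have h3k : 3*k < p := by omega
  rcases hp.dvd_mul.mp hdvd with h | h
  · have : p ∣ (3*k).factorial := by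
      refine h.trans ⟨(2*k).factorial * (3*k - 2*k).factorial, ?_⟩
      rw [← mul_assoc, Nat.choose_mul_factorial_mul_factorial (by omega)]
    have := (hp.dvd_factorial).mp this
    omega
  · have : p ∣ (2*k).factorial := by
      refine h.trans ⟨k.factorial * (2*k - k).factorial, ?_⟩
      rw [← mul_assoc, Nat.choose_mul_factorial_mul_factorial (by omega)]
    have := (hp.dvd_factorial).mp this
    omega
end

section
/- Let k ≥ 0 be an integer, let F be a field, and set f := x_0^4 + x_1^4 + x_2^4 in S = F[x_0, x_1, x_2]. Then f^{3k+1} belongs to the ideal (x_0^{4k+4}, x_1^{4k+4}, x_2^{4k+4}) of S. -/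
open MvPolynomial

/-- **Example 4.3, case `p ≡ 3 mod 4` (ideal membership).** Let `k ≥ 0`, let `F` be a
field, and set `f := x_0^4 + x_1^4 + x_2^4` in `S = F[x_0, x_1, x_2]`. Then
`f^(3k+1) ∈ (x_0^(4k+4), x_1^(4k+4), x_2^(4k+4))`. -/
theorem stmt_7 {F : Type*} [Field F] (k : ℕ)
    (f : MvPolynomial (Fin 3) F)
    (hf : f = X 0 ^ 4 + X 1 ^ 4 + X 2 ^ 4) :
    f ^ (3 * k + 1) ∈ Ideal.span (Set.range fun i : Fin 3 => X i ^ (4 * k + 4)) := by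
  subst hf
  have hmem : ∀ i : Fin 3, (X i ^ 4 : MvPolynomial (Fin 3) F) ^ (k + 1) ∈
      Ideal.span (Set.range fun i : Fin 3 => X i ^ (4 * k + 4)) := by
    intro i
    rw [← pow_mul]
    have : 4 * (k + 1) = 4 * k + 4 := by ring
    rw [this]
    exact Ideal.subset_span ⟨i, rfl⟩
  have h01 := Ideal.add_pow_add_pred_mem_of_pow_mem _ (hmem 0) (hmem 1)
  have h := Ideal.add_pow_add_pred_mem_of_pow_mem _ h01 (hmem 2)
  convert h using 2
  omega
end
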